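/- Let f ∈ ℂ[X] have degree n, let z be a root of f of multiplicity μ(z), and let z' ≠ z be a root of f minimizing the distance to z. Then sep(z,f)^{μ(z)} · Mea(f(X+z')) ≥ |f^{[μ(z')]}(z')|, where f^{[k]} = f^{(k)}/k! and sep(z,f) = min_{y root of f, y ≠ z} |y − z|. -/

import Mathlib

open Polynomial

/-- The Mahler measure of a complex polynomial. -/
noncomputable def Mea (f : Polynomial ℂ) : ℝ :=
  ‖f.leadingCoeff‖ * ((f.roots.map fun z => max 1 (‖z‖)).prod)

private lemma prod_ite_count (s : Multiset ℂ) (z : ℂ) (c : ℝ) :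
    (s.map fun w => if w = z then c else 1).prod = c ^ s.count z := by
  induction s using Multiset.induction with
  | empty => simp
  | cons a s ih =>
    rw [Multiset.map_cons, Multiset.prod_cons, ih, Multiset.count_cons]
    by_cases h : a = z
    · simp [h, pow_succ, mul_comm]
    · have h' : ¬ z = a := fun e => h e.symm
      simp [h, h']

/-- Let z be a root of f of multiplicity μ(z) and z' ≠ z a root of f minimizing
the distance to z.  Then sep(z,f)^{μ(z)} · Mea(f(X+z')) ≥ |f^{[μ(z')]}(z')|,
where f^{[k]} = f^{(k)}/k! and sep(z,f) = |z - z'|. -/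
theorem sep_pow_mul_mea_ge (f : Polynomial ℂ) (hf : f ≠ 0) (z z' : ℂ)
    (hz : f.IsRoot z) (hz' : f.IsRoot z') (hne : z' ≠ z)
    (hnear : ∀ y ∈ f.roots, y ≠ z → ‖z - z'‖ ≤ ‖z - y‖) :
    ‖((derivative^[f.rootMultiplicity z'] f).eval z') /
        (Nat.factorial (f.rootMultiplicity z') : ℂ)‖ ≤
      (‖z - z'‖) ^ (f.rootMultiplicity z) * Mea (f.comp (X + C z')) := by
  classical
  set m := f.rootMultiplicity z' with hm
  set μ := f.rootMultiplicity z with hμ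
  set g := f /ₘ (X - C z') ^ m with hgdef
  have hfg : (X - C z') ^ m * g = f := f.pow_mul_divByMonic_rootMultiplicity_eq z'
  have hg0 : g ≠ 0 := by
    intro h
    rw [h, mul_zero] at hfg
    exact hf hfg.symm
  have hlc : f.leadingCoeff ≠ 0 := leadingCoeff_ne_zero.mpr hf
  -- leading coefficient of g equals that of f
  have hlcg : g.leadingCoeff = f.leadingCoeff := by
    rw [← hfg, leadingCoeff_mul, Monic.leadingCoeff ((monic_X_sub_C z').pow m), one_mul]
  -- Step 1: the LHS equals |g.eval z'|
  have hLHS : ((derivative^[m] f).eval z') / (Nat.factorial m : ℂ) = g.eval z' := by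
    have h1 : (derivative^[m] f) = (Nat.factorial m : ℕ) • (hasseDeriv m f) := by
      rw [← Polynomial.factorial_smul_hasseDeriv]; rfl
    have h2 : (hasseDeriv m f).eval z' = (taylor z' f).coeff m :=
      (taylor_coeff (r := z') (f := f) m).symm
    have h3 : taylor z' f = X ^ m * taylor z' g := by
      conv_lhs => rw [← hfg]
      rw [taylor_apply, taylor_apply, mul_comp, pow_comp, sub_comp, X_comp, C_comp]
      simp
    have h4 : (taylor z' f).coeff m = g.eval z' := by
      rw [h3]
      simpa using coeff_X_pow_mul (taylor z' g) m 0
    rw [h1, nsmul_eq_mul, eval_mul, h2, h4, eval_natCast,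
      mul_div_cancel_left₀ _ (Nat.cast_ne_zero.mpr (Nat.factorial_ne_zero m) : (m.factorial : ℂ) ≠ 0)]
  rw [hLHS]
  -- roots decomposition
  have hroots : f.roots = Multiset.replicate m z' + g.roots := by
    conv_lhs => rw [← hfg]
    rw [roots_mul (by rw [hfg]; exact hf), roots_pow, roots_X_sub_C]
    simp [Multiset.nsmul_singleton]
  have hcount : g.roots.count z = μ := by
    have hcr : f.roots.count z = μ := count_roots f
    rw [hroots] at hcr
    simp only [Multiset.count_add, Multiset.count_replicate, if_neg hne, zero_add] at hcr
    exact hcr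
  -- splitting of g
  have hgsplit : g = C g.leadingCoeff * (g.roots.map fun a => X - C a).prod :=
    (IsAlgClosed.splits g).eq_prod_roots
  have hgeval : ‖g.eval z'‖
      = ‖f.leadingCoeff‖ * (g.roots.map fun w => ‖z' - w‖).prod := by
    conv_lhs => rw [hgsplit]
    rw [eval_mul, eval_C, eval_multiset_prod, norm_mul, hlcg]
    congr 1
    rw [Multiset.map_map, ← normHom_apply, map_multiset_prod, Multiset.map_map]
    simp
  -- roots of the composed polynomial
  have hfsplit : f = C f.leadingCoeff * (f.roots.map fun a => X - C a).prod :=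
    (IsAlgClosed.splits f).eq_prod_roots
  have hFsplit : f.comp (X + C z')
      = C f.leadingCoeff * ((f.roots.map fun a => a - z').map fun b => X - C b).prod := by
    conv_lhs => rw [hfsplit]
    rw [mul_comp, C_comp, multiset_prod_comp, Multiset.map_map, Multiset.map_map]
    congr 1
    apply congrArg
    apply Multiset.map_congr rfl
    intro a _
    simp only [Function.comp_apply, sub_comp, X_comp, C_comp, C_sub]
    ring
  have hFroots : (f.comp (X + C z')).roots = f.roots.map fun a => a - z' := by
    rw [hFsplit, roots_C_mul _ hlc, roots_multiset_prod_X_sub_C]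
  have hFlc : (f.comp (X + C z')).leadingCoeff = f.leadingCoeff := by
    rw [hFsplit, leadingCoeff_mul, leadingCoeff_C,
      (monic_multiset_prod_of_monic _ _ (fun b _ => monic_X_sub_C b)).leadingCoeff, mul_one]
  -- rewrite Mea
  have hMea : Mea (f.comp (X + C z'))
      = ‖f.leadingCoeff‖
        * (g.roots.map fun w => max 1 (‖w - z'‖)).prod := by
    rw [Mea, hFlc, hFroots, Multiset.map_map]
    congr 1
    rw [hroots]
    simp [Multiset.map_replicate]
  rw [hgeval, hMea]
  -- final inequality
  have key : (g.roots.map fun w => ‖z' - w‖).prod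
      ≤ (g.roots.map fun w =>
          (if w = z then ‖z - z'‖ else 1) * max 1 (‖w - z'‖)).prod := by
    apply Multiset.prod_map_le_prod_map₀
    · intro w _; positivity
    · intro w _
      by_cases h : w = z
      · rw [if_pos h, h, norm_sub_rev]
        calc ‖z - z'‖ = ‖z - z'‖ * 1 := (mul_one _).symm
          _ ≤ ‖z - z'‖ * max 1 (‖z - z'‖) := by
              exact mul_le_mul_of_nonneg_left (le_max_left _ _) (norm_nonneg _)
      · rw [if_neg h, one_mul, norm_sub_rev]
        exact le_max_right _ _
  have hsplit2 : (g.roots.map fun w =>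
        (if w = z then ‖z - z'‖ else 1) * max 1 (‖w - z'‖)).prod
      = ‖z - z'‖ ^ μ
        * (g.roots.map fun w => max 1 (‖w - z'‖)).prod := by
    rw [Multiset.prod_map_mul, prod_ite_count, hcount]
  rw [hsplit2] at key
  calc ‖f.leadingCoeff‖ * (g.roots.map fun w => ‖z' - w‖).prod
      ≤ ‖f.leadingCoeff‖
        * (‖z - z'‖ ^ μ * (g.roots.map fun w => max 1 (‖w - z'‖)).prod) :=
        mul_le_mul_of_nonneg_left key (norm_nonneg _)
    _ = ‖z - z'‖ ^ μ
        * (‖f.leadingCoeff‖ * (g.roots.map fun w => max 1 (‖w - z'‖)).prod) := by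
        ring
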